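/- For every positive integer n there exists a finite group G with at least n subgroups such that exactly one proper subgroup of G fails to be an intersection of maximal subgroups of G. -/
import Mathlib


/-- `H` is an intersection of maximal subgroups of `G`:
it equals the intersection of all maximal subgroups containing it. -/
def IsIMS {G : Type*} [Group G] (H : Subgroup G) : Prop :=
  H = sInf {M : Subgroup G | IsCoatom M ∧ H ≤ M}

/-- `G` is a CIM-group: every cyclic subgroup is an intersection of maximal subgroups. -/
def IsCIM (G : Type*) [Group G] : Prop :=
  ∀ g : G, IsIMS (Subgroup.zpowers g)

/-- `M` is a minimal normal subgroup of `G`. -/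
def IsMinimalNormal {G : Type*} [Group G] (M : Subgroup G) : Prop :=
  M ≠ ⊥ ∧ M.Normal ∧ ∀ N : Subgroup G, N.Normal → N ≤ M → N ≠ ⊥ → N = M

/-- The Fitting subgroup: the join of all nilpotent normal subgroups
(for a finite group, the largest nilpotent normal subgroup). -/
def fitting (G : Type*) [Group G] : Subgroup G :=
  sSup {N : Subgroup G | N.Normal ∧ Group.IsNilpotent ↥N}

/-- `G` is supersoluble: it has a normal series with cyclic factors. -/
def IsSupersoluble (G : Type*) [Group G] : Prop :=
  ∃ (n : ℕ) (s : Fin (n + 1) → Subgroup G), Monotone s ∧ s 0 = ⊥ ∧ s (Fin.last n) = ⊤ ∧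
    (∀ i, (s i).Normal) ∧
    ∀ i : Fin n, ∃ x : G, s i.succ ≤ s i.castSucc ⊔ Subgroup.zpowers x

namespace NonIMSAux

/-- A chosen square root of `-1` in `ZMod p` (or `1` if none exists). -/
noncomputable def ii (p : ℕ) : ZMod p :=
  open Classical in
  if h : ∃ z : ZMod p, z * z = -1 then h.choose else 1

lemma ii_spec {p : ℕ} (h : ∃ z : ZMod p, z * z = -1) : ii p * ii p = -1 := by
  rw [ii]
  rw [dif_pos h]
  exact h.choose_spec

lemma ii_pow_four (p : ℕ) : ii p ^ 4 = 1 := by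
  by_cases h : ∃ z : ZMod p, z * z = -1
  · have := ii_spec h
    have : ii p ^ 4 = (ii p * ii p) * (ii p * ii p) := by ring
    rw [this, ii_spec h]; ring
  · rw [ii]; rw [dif_neg h]; norm_num

/-- The underlying type of our group: pairs. -/
structure GG (p : ℕ) where
  a : ZMod p
  x : ZMod 4

/-- the action exponent -/
noncomputable def Iv (p : ℕ) (x : ZMod 4) : ZMod p := ii p ^ x.val

lemma Iv_add (p : ℕ) (x y : ZMod 4) : Iv p (x + y) = Iv p x * Iv p y := by
  unfold Iv
  rw [ZMod.val_add, ← pow_add]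
  set m := x.val + y.val
  conv_rhs => rw [← Nat.div_add_mod m 4]
  rw [pow_add, pow_mul, ii_pow_four, one_pow, one_mul]

lemma Iv_zero (p : ℕ) : Iv p 0 = 1 := by
  unfold Iv; norm_num [ZMod.val_zero]

lemma Iv_one (p : ℕ) : Iv p 1 = ii p := by
  unfold Iv
  have : (1 : ZMod 4).val = 1 := rfl
  rw [this, pow_one]

lemma Iv_two {p : ℕ} (hi : ii p * ii p = -1) : Iv p 2 = -1 := by
  unfold Iv
  have : (2 : ZMod 4).val = 2 := rfl
  rw [this, pow_two, hi]

lemma Iv_three {p : ℕ} (hi : ii p * ii p = -1) : Iv p 3 = -(ii p) := by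
  unfold Iv
  have : (3 : ZMod 4).val = 3 := rfl
  rw [this, pow_succ, pow_two, hi]; ring

noncomputable instance (p : ℕ) : Group (GG p) where
  mul g h := ⟨g.a + Iv p g.x * h.a, g.x + h.x⟩
  one := ⟨0, 0⟩
  inv g := ⟨-(Iv p (-g.x) * g.a), -g.x⟩
  mul_assoc g h k := by
    show GG.mk _ _ = GG.mk _ _
    rw [GG.mk.injEq]
    constructor
    · show (g.a + Iv p g.x * h.a) + Iv p (g.x + h.x) * k.a
        = g.a + Iv p g.x * (h.a + Iv p h.x * k.a)
      rw [Iv_add]; ring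
    · exact add_assoc _ _ _
  one_mul g := by
    show GG.mk (0 + Iv p 0 * g.a) (0 + g.x) = g
    rw [Iv_zero]
    cases g with
    | mk a x => simp
  mul_one g := by
    show GG.mk (g.a + Iv p g.x * 0) (g.x + 0) = g
    cases g with
    | mk a x => simp
  inv_mul_cancel g := by
    show GG.mk _ _ = GG.mk 0 0
    rw [GG.mk.injEq]
    constructor
    · show -(Iv p (-g.x) * g.a) + Iv p (-g.x) * g.a = 0
      ring
    · exact neg_add_cancel _

variable {p : ℕ}

lemma mul_def (a b : ZMod p) (x y : ZMod 4) :
    (⟨a, x⟩ * ⟨b, y⟩ : GG p) = ⟨a + Iv p x * b, x + y⟩ := rfl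

lemma one_def : (1 : GG p) = ⟨0, 0⟩ := rfl

lemma mul_x (g h : GG p) : (g * h).x = g.x + h.x := rfl

lemma inv_x (g : GG p) : (g⁻¹).x = -g.x := rfl


/-- powers of ⟨c,0⟩ -/
lemma pow_P (c : ZMod p) (m : ℕ) : (⟨c, 0⟩ : GG p) ^ m = ⟨(m : ZMod p) * c, 0⟩ := by
  induction m with
  | zero => simp [one_def]
  | succ k ih =>
    rw [pow_succ, ih, mul_def, Iv_zero]
    rw [GG.mk.injEq]
    constructor
    · push_cast; ring
    · simp

lemma sq_S (hi : ii p * ii p = -1) (a : ZMod p) :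
    (⟨a, 1⟩ : GG p) ^ 2 = ⟨(1 + ii p) * a, 2⟩ := by
  rw [pow_two, mul_def, Iv_one, GG.mk.injEq]
  constructor
  · ring
  · decide

lemma cube_S (hi : ii p * ii p = -1) (a : ZMod p) :
    (⟨a, 1⟩ : GG p) ^ 3 = ⟨ii p * a, 3⟩ := by
  rw [pow_succ, sq_S hi, mul_def, Iv_two hi, GG.mk.injEq]
  constructor
  · ring
  · decide

lemma pow4_S (hi : ii p * ii p = -1) (a : ZMod p) :
    (⟨a, 1⟩ : GG p) ^ 4 = 1 := by
  rw [pow_succ, cube_S hi, mul_def, Iv_three hi, one_def, GG.mk.injEq]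
  constructor
  · ring
  · decide

lemma sq_T (hi : ii p * ii p = -1) (a : ZMod p) :
    (⟨a, 2⟩ : GG p) ^ 2 = 1 := by
  rw [pow_two, mul_def, Iv_two hi, one_def, GG.mk.injEq]
  constructor
  · ring
  · decide

/-- membership in zpowers of an element with g^4 = 1 -/
lemma mem_zpowers_four {G : Type*} [Group G] {g : G} (hg : g ^ 4 = 1) (h : G) :
    h ∈ Subgroup.zpowers g ↔ h = 1 ∨ h = g ∨ h = g ^ 2 ∨ h = g ^ 3 := by
  constructor
  · intro hh
    obtain ⟨k, hk⟩ := Subgroup.mem_zpowers_iff.mp hh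
    rw [← hk, zpow_eq_zpow_emod' k hg]
    simp only [Nat.cast_ofNat]
    have h0 : 0 ≤ k % (4 : ℤ) := Int.emod_nonneg k (by norm_num)
    have h1 : k % (4 : ℤ) < 4 := Int.emod_lt_of_pos k (by norm_num)
    have hm : ((k % (4:ℤ)).toNat : ℤ) = k % 4 := Int.toNat_of_nonneg h0
    set m := (k % (4:ℤ)).toNat with hmdef
    have h1' : m < 4 := by omega
    rw [← hm, zpow_natCast]
    interval_cases m
    · left; rw [pow_zero]
    · right; left; rw [pow_one]
    · right; right; left; rfl
    · right; right; right; rfl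
  · rintro (rfl | rfl | rfl | rfl)
    exacts [one_mem _, Subgroup.mem_zpowers _,
      pow_mem (Subgroup.mem_zpowers _) 2, pow_mem (Subgroup.mem_zpowers _) 3]

/-- the subgroup Cp -/
def P (p : ℕ) : Subgroup (GG p) where
  carrier := {g | g.x = 0}
  mul_mem' := by
    intro g h hg hh
    show (g * h).x = 0
    rw [mul_x]
    simp only [Set.mem_setOf_eq] at hg hh
    rw [hg, hh, add_zero]
  one_mem' := rfl
  inv_mem' := by
    intro g hg
    show (g⁻¹).x = 0
    rw [inv_x]
    simp only [Set.mem_setOf_eq] at hg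
    rw [hg, neg_zero]

/-- the subgroup Cp ⋊ C2 of index 2 -/
def M0 (p : ℕ) : Subgroup (GG p) where
  carrier := {g | g.x = 0 ∨ g.x = 2}
  mul_mem' := by
    intro g h hg hh
    show (g * h).x = 0 ∨ (g * h).x = 2
    rw [mul_x]
    simp only [Set.mem_setOf_eq] at hg hh
    rcases hg with h1 | h1 <;> rcases hh with h2 | h2 <;> rw [h1, h2] <;> decide
  one_mem' := Or.inl rfl
  inv_mem' := by
    intro g hg
    show (g⁻¹).x = 0 ∨ (g⁻¹).x = 2
    rw [inv_x]
    simp only [Set.mem_setOf_eq] at hg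
    rcases hg with h1 | h1 <;> rw [h1] <;> decide

/-- Sylow 2-subgroups -/
noncomputable def S (p : ℕ) (a : ZMod p) : Subgroup (GG p) :=
  Subgroup.zpowers (⟨a, 1⟩ : GG p)

/-- order-2 subgroups -/
noncomputable def T (p : ℕ) (a : ZMod p) : Subgroup (GG p) :=
  Subgroup.zpowers (⟨a, 2⟩ : GG p)

lemma mem_P {g : GG p} : g ∈ P p ↔ g.x = 0 := Iff.rfl

lemma mk_x (a : ZMod p) (x : ZMod 4) : (⟨a, x⟩ : GG p).x = x := rfl

lemma mem_M0 {g : GG p} : g ∈ M0 p ↔ g.x = 0 ∨ g.x = 2 := Iff.rfl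

lemma mem_S (hi : ii p * ii p = -1) {a : ZMod p} {g : GG p} :
    g ∈ S p a ↔ g = 1 ∨ g = ⟨a, 1⟩ ∨ g = ⟨(1 + ii p) * a, 2⟩ ∨ g = ⟨ii p * a, 3⟩ := by
  rw [S, mem_zpowers_four (pow4_S hi a), sq_S hi, cube_S hi]

lemma mem_T (hi : ii p * ii p = -1) {a : ZMod p} {g : GG p} :
    g ∈ T p a ↔ g = 1 ∨ g = ⟨a, 2⟩ := by
  rw [T]
  have h4 : (⟨a, 2⟩ : GG p) ^ 4 = 1 := by
    have h22 : (⟨a, 2⟩ : GG p) ^ 4 = ((⟨a, 2⟩ : GG p) ^ 2) ^ 2 := by rw [← pow_mul]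
    rw [h22, sq_T hi, one_pow]
  rw [mem_zpowers_four h4, sq_T hi, pow_succ, sq_T hi, one_mul]
  tauto

lemma x_cases : ∀ x : ZMod 4, x = 0 ∨ x = 1 ∨ x = 2 ∨ x = 3 := by decide


section Classify

variable [Fact p.Prime]

lemma P_le {K : Subgroup (GG p)} (h : ∃ g ∈ K, g.x = 0 ∧ g.a ≠ 0) : P p ≤ K := by
  obtain ⟨g, hgK, hx, ha⟩ := h
  cases g with
  | mk c y =>
    simp only at hx ha
    subst hx
    intro h hh
    have hhx : h.x = 0 := hh
    have key : (⟨c, 0⟩ : GG p) ^ ((h.a * c⁻¹).val) = ⟨h.a, 0⟩ := by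
      rw [pow_P, ZMod.natCast_zmod_val, GG.mk.injEq]
      constructor
      · rw [mul_assoc, inv_mul_cancel₀ ha, mul_one]
      · rfl
    have : h = ⟨h.a, 0⟩ := by
      cases h with
      | mk b z =>
        simp only at hhx
        rw [hhx]
    rw [this, ← key]
    exact pow_mem hgK _

lemma shift {K : Subgroup (GG p)} (hPK : P p ≤ K) {c : ZMod p} {y : ZMod 4}
    (hc : (⟨c, y⟩ : GG p) ∈ K) (b : ZMod p) : (⟨b, y⟩ : GG p) ∈ K := by
  have h0 : (⟨b - c, 0⟩ : GG p) ∈ K := hPK (show ((⟨b - c, 0⟩ : GG p)).x = 0 from rfl)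
  have hmul : (⟨b - c, 0⟩ : GG p) * ⟨c, y⟩ = ⟨b, y⟩ := by
    rw [mul_def, Iv_zero, GG.mk.injEq]
    constructor
    · ring
    · rw [zero_add]
  rw [← hmul]
  exact mul_mem h0 hc

lemma eq_top_of (hi : ii p * ii p = -1) {K : Subgroup (GG p)} (hPK : P p ≤ K)
    {a : ZMod p} (haK : (⟨a, 1⟩ : GG p) ∈ K) : K = ⊤ := by
  rw [eq_top_iff]
  intro g _
  cases g with
  | mk b y =>
    rcases x_cases y with h | h | h | h <;> subst h
    · exact hPK rfl
    · exact shift hPK haK b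
    · exact shift hPK (by rw [← sq_S hi]; exact pow_mem haK 2) b
    · exact shift hPK (by rw [← cube_S hi]; exact pow_mem haK 3) b

lemma inj_of_triv {K : Subgroup (GG p)} (htriv : ∀ g ∈ K, g.x = 0 → g = 1)
    {g h : GG p} (hg : g ∈ K) (hh : h ∈ K) (hx : g.x = h.x) : g = h := by
  have hm : g * h⁻¹ ∈ K := mul_mem hg (inv_mem hh)
  have hx0 : (g * h⁻¹).x = 0 := by rw [mul_x, inv_x, hx, add_neg_cancel]
  exact mul_inv_eq_one.mp (htriv _ hm hx0)

lemma triv_of {K : Subgroup (GG p)} (hP : ∀ g ∈ K, g.x = 0 → g.a = 0) :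
    ∀ g ∈ K, g.x = 0 → g = 1 := by
  intro g hg hx
  have ha := hP g hg hx
  cases g with
  | mk b y =>
    simp only at ha hx
    rw [one_def, GG.mk.injEq]
    exact ⟨ha, hx⟩

theorem classify (hi : ii p * ii p = -1) (K : Subgroup (GG p)) :
    K = ⊥ ∨ K = ⊤ ∨ K = P p ∨ K = M0 p ∨ (∃ a, K = S p a) ∨ (∃ a, K = T p a) := by
  by_cases hodd : ∃ g ∈ K, g.x = 1 ∨ g.x = 3
  · have h1 : ∃ a : ZMod p, (⟨a, 1⟩ : GG p) ∈ K := by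
      obtain ⟨g, hgK, hg⟩ := hodd
      rcases hg with hg | hg
      · refine ⟨g.a, ?_⟩
        have : g = ⟨g.a, 1⟩ := by
          cases g with
          | mk b y => simp only at hg ⊢; rw [hg]
        rwa [← this]
      · refine ⟨(g⁻¹).a, ?_⟩
        have hx : (g⁻¹).x = 1 := by rw [inv_x, hg]; decide
        have : g⁻¹ = ⟨(g⁻¹).a, 1⟩ := by rw [← hx]
        rw [← this]
        exact inv_mem hgK
    obtain ⟨a, haK⟩ := h1
    by_cases hP : ∃ g ∈ K, g.x = 0 ∧ g.a ≠ 0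
    · exact Or.inr (Or.inl (eq_top_of hi (P_le hP) haK))
    · push_neg at hP
      have htriv := triv_of hP
      right; right; right; right; left
      refine ⟨a, le_antisymm ?_ (Subgroup.zpowers_le.mpr haK)⟩
      intro g hgK
      have h2K : (⟨(1 + ii p) * a, 2⟩ : GG p) ∈ K := by
        rw [← sq_S hi]; exact pow_mem haK 2
      have h3K : (⟨ii p * a, 3⟩ : GG p) ∈ K := by
        rw [← cube_S hi]; exact pow_mem haK 3
      rcases x_cases g.x with h | h | h | h
      · rw [htriv g hgK h]; exact one_mem _
      · rw [inj_of_triv htriv hgK haK h]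
        exact Subgroup.mem_zpowers _
      · rw [inj_of_triv htriv hgK h2K h]
        exact (mem_S hi).mpr (Or.inr (Or.inr (Or.inl rfl)))
      · rw [inj_of_triv htriv hgK h3K h]
        exact (mem_S hi).mpr (Or.inr (Or.inr (Or.inr rfl)))
  · have heven : ∀ g ∈ K, g.x = 0 ∨ g.x = 2 := by
      intro g hg
      rcases x_cases g.x with h | h | h | h
      · exact Or.inl h
      · exact absurd ⟨g, hg, Or.inl h⟩ hodd
      · exact Or.inr h
      · exact absurd ⟨g, hg, Or.inr h⟩ hodd
    by_cases hP : ∃ g ∈ K, g.x = 0 ∧ g.a ≠ 0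
    · have hPK : P p ≤ K := P_le hP
      by_cases h2 : ∃ c, (⟨c, 2⟩ : GG p) ∈ K
      · right; right; right; left
        obtain ⟨c, hc⟩ := h2
        apply le_antisymm
        · intro g hg
          exact heven g hg
        · intro g hg
          rcases (mem_M0.mp hg) with h | h
          · exact hPK h
          · have : g = ⟨g.a, 2⟩ := by
              cases g with
              | mk b y => simp only at h ⊢; rw [h]
            rw [this]
            exact shift hPK hc g.a
      · right; right; left
        apply le_antisymm
        · intro g hg
          rcases heven g hg with h | h
          · exact h
          · exfalso
            apply h2
            refine ⟨g.a, ?_⟩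
            have : g = ⟨g.a, 2⟩ := by
              cases g with
              | mk b y => simp only at h ⊢; rw [h]
            rwa [← this]
        · exact hPK
    · push_neg at hP
      have htriv := triv_of hP
      by_cases h2 : ∃ c, (⟨c, 2⟩ : GG p) ∈ K
      · obtain ⟨c, hc⟩ := h2
        right; right; right; right; right
        refine ⟨c, le_antisymm ?_ (Subgroup.zpowers_le.mpr hc)⟩
        intro g hg
        rcases heven g hg with h | h
        · rw [htriv g hg h]; exact one_mem _
        · rw [inj_of_triv htriv hg hc h]
          exact Subgroup.mem_zpowers _
      · left
        rw [Subgroup.eq_bot_iff_forall]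
        intro g hg
        rcases heven g hg with h | h
        · exact htriv g hg h
        · exfalso
          apply h2
          refine ⟨g.a, ?_⟩
          have : g = ⟨g.a, 2⟩ := by
            cases g with
            | mk b y => simp only at h ⊢; rw [h]
          rwa [← this]


lemma notMem_S_x0 (hi : ii p * ii p = -1) {a b : ZMod p} (hb : b ≠ 0) :
    (⟨b, 0⟩ : GG p) ∉ S p a := by
  intro h
  rcases (mem_S hi).mp h with h | h | h | h <;>
    simp only [one_def, GG.mk.injEq] at h
  · exact hb h.1
  all_goals exact absurd h.2 (by decide)

lemma notMem_T_x0 (hi : ii p * ii p = -1) {a b : ZMod p} (hb : b ≠ 0) :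
    (⟨b, 0⟩ : GG p) ∉ T p a := by
  intro h
  rcases (mem_T hi).mp h with h | h <;>
    simp only [one_def, GG.mk.injEq] at h
  · exact hb h.1
  · exact absurd h.2 (by decide)

lemma M0_ne_top : M0 p ≠ ⊤ := by
  intro h
  have : (⟨0, 1⟩ : GG p) ∈ M0 p := h ▸ Subgroup.mem_top _
  rcases mem_M0.mp this with h1 | h1 <;> rw [mk_x] at h1 <;>
    exact absurd h1 (by decide)

lemma P_lt_M0 : P p < M0 p := by
  refine lt_of_le_of_ne (fun g h => Or.inl h) ?_
  intro h
  have : (⟨0, 2⟩ : GG p) ∈ P p := h ▸ (Or.inr rfl : (⟨0,2⟩ : GG p) ∈ M0 p)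
  have h2 := mem_P.mp this
  rw [mk_x] at h2
  exact absurd h2 (by decide)

lemma coatom_M0 (hi : ii p * ii p = -1) : IsCoatom (M0 p) := by
  constructor
  · exact M0_ne_top
  · intro K hK
    rcases classify hi K with rfl | rfl | rfl | rfl | ⟨a, rfl⟩ | ⟨a, rfl⟩
    · exact absurd hK not_lt_bot
    · rfl
    · have h2 := mem_P.mp (hK.le (Or.inr rfl : (⟨0,2⟩ : GG p) ∈ M0 p))
      rw [mk_x] at h2
      exact absurd h2 (by decide)
    · exact absurd hK (lt_irrefl _)
    · exact absurd (hK.le (Or.inl rfl : (⟨1,0⟩ : GG p) ∈ M0 p))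
        (notMem_S_x0 hi one_ne_zero)
    · exact absurd (hK.le (Or.inl rfl : (⟨1,0⟩ : GG p) ∈ M0 p))
        (notMem_T_x0 hi one_ne_zero)

lemma coatom_S (hi : ii p * ii p = -1) (a : ZMod p) : IsCoatom (S p a) := by
  constructor
  · intro h
    have : (⟨a + 1, 1⟩ : GG p) ∈ S p a := h ▸ Subgroup.mem_top _
    rcases (mem_S hi).mp this with h1 | h1 | h1 | h1 <;>
      simp only [one_def, GG.mk.injEq] at h1
    · exact absurd h1.2 (by decide)
    · have ha : a + 1 = a + 0 := by rw [add_zero]; exact h1.1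
      exact one_ne_zero (add_left_cancel ha)
    · exact absurd h1.2 (by decide)
    · exact absurd h1.2 (by decide)
  · intro K hK
    have haK : (⟨a, 1⟩ : GG p) ∈ K := hK.le (Subgroup.mem_zpowers _)
    rcases classify hi K with rfl | rfl | rfl | rfl | ⟨b, rfl⟩ | ⟨b, rfl⟩
    · rw [Subgroup.mem_bot] at haK
      simp only [one_def, GG.mk.injEq] at haK
      exact absurd haK.2 (by decide)
    · rfl
    · have h1 := mem_P.mp haK
      rw [mk_x] at h1
      exact absurd h1 (by decide)
    · rcases mem_M0.mp haK with h1 | h1 <;> rw [mk_x] at h1 <;>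
        exact absurd h1 (by decide)
    · exfalso
      rcases (mem_S hi).mp haK with h1 | h1 | h1 | h1 <;>
        simp only [one_def, GG.mk.injEq] at h1
      · exact absurd h1.2 (by decide)
      · exact hK.ne (by rw [h1.1])
      · exact absurd h1.2 (by decide)
      · exact absurd h1.2 (by decide)
    · rcases (mem_T hi).mp haK with h1 | h1 <;>
        simp only [one_def, GG.mk.injEq] at h1 <;> exact absurd h1.2 (by decide)

lemma coatom_of_P_le (hi : ii p * ii p = -1) {M : Subgroup (GG p)}
    (hM : IsCoatom M) (hPM : P p ≤ M) : M = M0 p := by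
  have h10 : (⟨1, 0⟩ : GG p) ∈ P p := rfl
  rcases classify hi M with rfl | rfl | rfl | rfl | ⟨a, rfl⟩ | ⟨a, rfl⟩
  · have := hPM h10
    rw [Subgroup.mem_bot] at this
    simp only [one_def, GG.mk.injEq] at this
    exact absurd this.1 one_ne_zero
  · exact absurd rfl hM.1
  · exact absurd (hM.2 _ P_lt_M0) M0_ne_top
  · rfl
  · exact absurd (hPM h10) (notMem_S_x0 hi one_ne_zero)
  · exact absurd (hPM h10) (notMem_T_x0 hi one_ne_zero)

end Classify

end NonIMSAux

namespace NonIMSAux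

variable {p : ℕ}

lemma isIMS_of_coatom {G : Type*} [Group G] {K : Subgroup G} (h : IsCoatom K) : IsIMS K :=
  le_antisymm (le_sInf fun _ hM => hM.2) (sInf_le ⟨h, le_rfl⟩)

lemma isIMS_of_pair {G : Type*} [Group G] {K M₁ M₂ : Subgroup G}
    (h1 : IsCoatom M₁) (h2 : IsCoatom M₂) (k1 : K ≤ M₁) (k2 : K ≤ M₂)
    (hm : M₁ ⊓ M₂ ≤ K) : IsIMS K :=
  le_antisymm (le_sInf fun _ hM => hM.2)
    (le_trans (le_inf (sInf_le ⟨h1, k1⟩) (sInf_le ⟨h2, k2⟩)) hm)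

section IMS

variable [Fact p.Prime]

lemma ii_ne_zero (hi : ii p * ii p = -1) : ii p ≠ 0 := by
  intro h
  rw [h, mul_zero] at hi
  exact one_ne_zero (neg_eq_zero.mp hi.symm)

lemma one_add_ii_ne_zero (hi : ii p * ii p = -1) (h2 : (2 : ZMod p) ≠ 0) :
    1 + ii p ≠ 0 := by
  intro h
  have hie : ii p = -1 := by linear_combination h
  rw [hie] at hi
  apply h2
  linear_combination hi

lemma isIMS_bot (hi : ii p * ii p = -1) (h2 : (2 : ZMod p) ≠ 0) :
    IsIMS (⊥ : Subgroup (GG p)) := by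
  refine isIMS_of_pair (coatom_S hi 0) (coatom_S hi 1) bot_le bot_le ?_
  intro g hg
  obtain ⟨hg0, hg1⟩ := hg
  rw [Subgroup.mem_bot]
  rcases (mem_S hi).mp hg0 with h | h | h | h
  · exact h
  · exfalso
    rw [h] at hg1
    rcases (mem_S hi).mp hg1 with h' | h' | h' | h'
    · rw [one_def, GG.mk.injEq] at h'
      exact absurd h'.2 (by decide)
    · rw [GG.mk.injEq] at h'
      exact absurd h'.1 zero_ne_one
    · rw [GG.mk.injEq] at h'
      exact absurd h'.2 (by decide)
    · rw [GG.mk.injEq] at h'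
      exact absurd h'.2 (by decide)
  · exfalso
    rw [h] at hg1
    rcases (mem_S hi).mp hg1 with h' | h' | h' | h'
    · rw [one_def, GG.mk.injEq] at h'
      exact absurd h'.2 (by decide)
    · rw [GG.mk.injEq] at h'
      exact absurd h'.2 (by decide)
    · rw [GG.mk.injEq] at h'
      have h1 := h'.1
      rw [mul_zero, mul_one] at h1
      exact one_add_ii_ne_zero hi h2 h1.symm
    · rw [GG.mk.injEq] at h'
      exact absurd h'.2 (by decide)
  · exfalso
    rw [h] at hg1
    rcases (mem_S hi).mp hg1 with h' | h' | h' | h'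
    · rw [one_def, GG.mk.injEq] at h'
      exact absurd h'.2 (by decide)
    · rw [GG.mk.injEq] at h'
      exact absurd h'.2 (by decide)
    · rw [GG.mk.injEq] at h'
      exact absurd h'.2 (by decide)
    · rw [GG.mk.injEq] at h'
      have h1 := h'.1
      rw [mul_zero, mul_one] at h1
      exact ii_ne_zero hi h1.symm

lemma isIMS_T (hi : ii p * ii p = -1) (h2 : (2 : ZMod p) ≠ 0) (b : ZMod p) :
    IsIMS (T p b) := by
  set a := (1 + ii p)⁻¹ * b with ha
  have hab : (1 + ii p) * a = b := by
    rw [ha, ← mul_assoc, mul_inv_cancel₀ (one_add_ii_ne_zero hi h2), one_mul]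
  have hTS : T p b ≤ S p a := by
    rw [T, Subgroup.zpowers_le]
    exact (mem_S hi).mpr (Or.inr (Or.inr (Or.inl (by rw [hab]))))
  have hTM : T p b ≤ M0 p := by
    intro g hg
    rcases (mem_T hi).mp hg with h | h
    · rw [h]; exact one_mem _
    · rw [h]; exact Or.inr rfl
  refine isIMS_of_pair (coatom_M0 hi) (coatom_S hi a) hTM hTS ?_
  intro g hg
  obtain ⟨hgM, hgS⟩ := hg
  rcases (mem_S hi).mp hgS with h | h | h | h
  · rw [h]; exact one_mem _
  · rw [h] at hgM
    rcases mem_M0.mp hgM with h1 | h1 <;> rw [mk_x] at h1 <;>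
      exact absurd h1 (by decide)
  · rw [h, hab]
    exact (mem_T hi).mpr (Or.inr rfl)
  · rw [h] at hgM
    rcases mem_M0.mp hgM with h1 | h1 <;> rw [mk_x] at h1 <;>
      exact absurd h1 (by decide)

lemma P_not_isIMS (hi : ii p * ii p = -1) : ¬ IsIMS (P p) := by
  intro hIMS
  have hset : {M : Subgroup (GG p) | IsCoatom M ∧ P p ≤ M} = {M0 p} := by
    ext M
    constructor
    · rintro ⟨hM, hPM⟩
      exact coatom_of_P_le hi hM hPM
    · rintro rfl
      exact ⟨coatom_M0 hi, P_lt_M0.le⟩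
  rw [IsIMS, hset, sInf_singleton] at hIMS
  have : (⟨0, 2⟩ : GG p) ∈ P p := hIMS ▸ (Or.inr rfl : (⟨0,2⟩ : GG p) ∈ M0 p)
  have h1 := mem_P.mp this
  rw [mk_x] at h1
  exact absurd h1 (by decide)

lemma P_ne_top : (P p) ≠ ⊤ := by
  intro h
  have : (⟨0, 1⟩ : GG p) ∈ P p := h ▸ Subgroup.mem_top _
  have h1 := mem_P.mp this
  rw [mk_x] at h1
  exact absurd h1 (by decide)

end IMS

end NonIMSAux

open NonIMSAux

theorem exists_group_with_unique_non_IMS_subgroup (n : ℕ) (hn : 0 < n) :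
    ∃ (G : Type) (_ : Group G) (_ : Finite G),
      n ≤ Nat.card (Subgroup G) ∧ ∃! K : Subgroup G, K ≠ ⊤ ∧ ¬ IsIMS K := by
  obtain ⟨p, hp, hlt, hmod⟩ := Nat.exists_prime_gt_modEq_one (k := 4) (max n 4) (by norm_num)
  haveI : Fact p.Prime := ⟨hp⟩
  haveI : NeZero p := ⟨hp.ne_zero⟩
  have hmax : 4 ≤ max n 4 := le_max_right n 4
  have hp4 : p % 4 = 1 := by
    have h1 : p % 4 = 1 % 4 := hmod
    simpa using h1
  have hsq : ∃ z : ZMod p, z * z = -1 := by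
    have h43 : p % 4 ≠ 3 := by omega
    obtain ⟨z, hz⟩ := ZMod.exists_sq_eq_neg_one_iff.mpr h43
    exact ⟨z, hz.symm⟩
  have hi := ii_spec hsq
  have h2 : (2 : ZMod p) ≠ 0 := by
    intro h
    have hdvd : p ∣ 2 := by
      have h' : ((2 : ℕ) : ZMod p) = 0 := by exact_mod_cast h
      exact (ZMod.natCast_eq_zero_iff 2 p).mp h'
    have := Nat.le_of_dvd (by norm_num) hdvd
    omega
  have hfin : Finite (GG p) := by
    have e : GG p ≃ ZMod p × ZMod 4 :=
      ⟨fun g => (g.a, g.x), fun z => ⟨z.1, z.2⟩, fun g => rfl, fun z => rfl⟩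
    exact Finite.of_equiv _ e.symm
  refine ⟨GG p, inferInstance, hfin, ?_, ?_⟩
  · haveI : Finite (Subgroup (GG p)) :=
      Finite.of_injective (fun K => (K : Set (GG p))) SetLike.coe_injective
    have hinj : Function.Injective (fun a : ZMod p => T p a) := by
      intro a b hab
      have hab' : T p a = T p b := hab
      have hmem : (⟨a, 2⟩ : GG p) ∈ T p b := by
        rw [← hab']; exact Subgroup.mem_zpowers _
      rcases (mem_T hi).mp hmem with h | h <;>
        simp only [one_def, GG.mk.injEq] at h
      · exact absurd h.2 (by decide)
      · exact h.1
    calc n ≤ p := by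
            have := le_max_left n 4
            omega
      _ = Nat.card (ZMod p) := (Nat.card_zmod p).symm
      _ ≤ Nat.card (Subgroup (GG p)) := Nat.card_le_card_of_injective _ hinj
  · refine ⟨P p, ⟨P_ne_top, P_not_isIMS hi⟩, ?_⟩
    rintro K ⟨hKtop, hKn⟩
    rcases classify hi K with rfl | rfl | rfl | rfl | ⟨a, rfl⟩ | ⟨a, rfl⟩
    · exact absurd (isIMS_bot hi h2) hKn
    · exact absurd rfl hKtop
    · rfl
    · exact absurd (isIMS_of_coatom (coatom_M0 hi)) hKn
    · exact absurd (isIMS_of_coatom (coatom_S hi a)) hKn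
    · exact absurd (isIMS_T hi h2 a) hKn
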